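/- Let Σ be an oriented surface of genus m with n punctures, γ a generic immersed closed curve with base point p, and τ ∈ π₁(Σ,p). For all sufficiently small ε > 0, the intersection number of the image of the 2-simplex C^ε under the lifted evaluation map ev_τ with the diagonal Δ ⊂ Σ̃ × Σ̃ equals the coefficient of τ in ⟨γ⟩: I(ev_τ(C^ε), Δ) = ⟨γ⟩^τ. -/

import Mathlib

/-!
Lemma `Lem:Intersec`: I(ev_τ(C^ε), Δ) = ⟨γ⟩^τ, the intersection number of the image of
the 2-simplex C^ε under the lifted evaluation map with the diagonal of the universal cover
equals the coefficient of τ in ⟨γ⟩.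

The surface is an arbitrary oriented smooth 2-manifold `M` (oriented by a continuous
nonvanishing area form `ω`, which also provides the signs of crossings).  The group ring
`ℤ[π₁(M,p)]` is realized as `(Path.Homotopic.Quotient p p) →₀ ℤ`.  All genericity data
(double points of `γ`, intersections of `γ_T` with `γ`, tangency points of `γ'` with `X`,
intersections of the semitrajectories of the base point with `γ`) is given by finite
enumerations together with hypotheses stating that they are exactly, and transversally,
what they should be.  The term `2·ind_T(γ,p)` is written as `⟨γ,ΦN⟩ + ⟨ΦP,γ⟩`.
-/

open scoped Manifold unitInterval
noncomputable section

abbrev E2 : Type := EuclideanSpace ℝ (Fin 2)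

variable {M : Type*} [TopologicalSpace M] [ChartedSpace E2 M] [IsManifold (𝓡 2) (⊤ : ℕ∞) M]

/-- The velocity vector of a curve in a surface. -/
def tvec (γ : ℝ → M) (t : ℝ) : E2 :=
  mfderiv 𝓘(ℝ, ℝ) (𝓡 2) γ t ((1 : ℝ) : TangentSpace 𝓘(ℝ, ℝ) t)

/-- Reparametrized restriction of a curve to `[a,b]`, as a `Path`. -/
def seg (γ : ℝ → M) (hγ : Continuous γ) (a b : ℝ) : Path (γ a) (γ b) where
  toFun s := γ (a + (b - a) * s)
  continuous_toFun := by fun_prop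
  source' := by simp
  target' := by simp

/-- The flow arc from `Φ a x` to `Φ b x`, as a `Path`. -/
def flowSeg (Φ : ℝ → M → M) (hΦ : Continuous fun q : ℝ × M => Φ q.1 q.2) (x : M) (a b : ℝ) :
    Path (Φ a x) (Φ b x) where
  toFun s := Φ (a + (b - a) * s) x
  continuous_toFun := by fun_prop
  source' := by simp
  target' := by simp

/-- The sign (`±1`) of a real quantity, used for signs of crossings. -/
def osgn (x : ℝ) : ℤ := if 0 < x then 1 else -1

/-- Homotopy class `τ_d(γ)` of the loop `γ|[0,u]` followed by `γ|[v,1]`, for a double point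
`d = γ(u) = γ(v)`. -/
def dblClass (γ : ℝ → M) (hγ : Continuous γ) (p : M) (h0 : γ 0 = p) (h1 : γ 1 = p)
    (u v : ℝ) (huv : γ u = γ v) : Path.Homotopic.Quotient p p :=
  ⟦((seg γ hγ 0 u).trans ((seg γ hγ v 1).cast huv rfl)).cast h0.symm h1.symm⟧

/-- Homotopy class `[γ]` of the whole based loop `γ`. -/
def loopClass (γ : ℝ → M) (hγ : Continuous γ) (p : M) (h0 : γ 0 = p) (h1 : γ 1 = p) :
    Path.Homotopic.Quotient p p :=
  ⟦(seg γ hγ 0 1).cast h0.symm h1.symm⟧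

/-- Homotopy class `τ_{d,T}(γ)` of the loop `γ|[0,a]`, then the flow arc `Φ_t(γ(a))`,
`t ∈ [0,T]`, then `γ|[b,1]`, for an intersection `d = Φ_T(γ(a)) = γ(b)` of `γ_T` with `γ`. -/
def shiftClass (γ : ℝ → M) (hγ : Continuous γ) (p : M) (h0 : γ 0 = p) (h1 : γ 1 = p)
    (Φ : ℝ → M → M) (hΦ : Continuous fun q : ℝ × M => Φ q.1 q.2) (hΦ0 : ∀ x, Φ 0 x = x)
    (T a b : ℝ) (hab : Φ T (γ a) = γ b) : Path.Homotopic.Quotient p p :=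
  ⟦(((seg γ hγ 0 a).trans ((flowSeg Φ hΦ (γ a) 0 T).cast (hΦ0 (γ a)).symm rfl)).trans
      ((seg γ hγ b 1).cast hab rfl)).cast h0.symm h1.symm⟧

/-- Homotopy class `τ_d(γ, ΦN)` of the loop `γ|[0,s]` followed by the flow arc `Φ_t(p)`,
`t ∈ [r,0]`, for an intersection `d = γ(s) = Φ_r(p)` of `γ` with the negative semitrajectory
of the base point. -/
def minusClass (γ : ℝ → M) (hγ : Continuous γ) (p : M) (h0 : γ 0 = p)
    (Φ : ℝ → M → M) (hΦ : Continuous fun q : ℝ × M => Φ q.1 q.2) (hΦ0 : ∀ x, Φ 0 x = x)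
    (r s : ℝ) (h : Φ r p = γ s) : Path.Homotopic.Quotient p p :=
  ⟦((seg γ hγ 0 s).trans ((flowSeg Φ hΦ p r 0).cast h.symm (hΦ0 p).symm)).cast h0.symm rfl⟧

/-- Homotopy class `τ_d(ΦP, γ)` of the flow arc `Φ_t(p)`, `t ∈ [0,r]`, followed by `γ|[s,1]`,
for an intersection `d = Φ_r(p) = γ(s)` of the positive semitrajectory of the base point
with `γ`. -/
def plusClass (γ : ℝ → M) (hγ : Continuous γ) (p : M) (h1 : γ 1 = p)
    (Φ : ℝ → M → M) (hΦ : Continuous fun q : ℝ × M => Φ q.1 q.2) (hΦ0 : ∀ x, Φ 0 x = x)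
    (r s : ℝ) (h : Φ r p = γ s) : Path.Homotopic.Quotient p p :=
  ⟦(((flowSeg Φ hΦ p 0 r).cast (hΦ0 p).symm rfl).trans ((seg γ hγ s 1).cast h rfl)).cast
      rfl h1.symm⟧

/-- The universal covering space of `M` (with base point `p`): homotopy classes of paths
in `M` starting at `p`, recorded together with their endpoints (the covering projection is
the first component). -/
def Cover (M : Type*) [TopologicalSpace M] (p : M) : Type _ :=
  Σ x : M, Path.Homotopic.Quotient p x

/-- First component `ξ₁` of the lifted evaluation map `ev_τ`: the class of the path
`γ|[0,u]`. -/
def evFst (γ : ℝ → M) (hγ : Continuous γ) (p : M) (h0 : γ 0 = p) (u : ℝ) : Cover M p :=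
  ⟨γ u, ⟦(seg γ hγ 0 u).cast h0.symm rfl⟧⟩

/-- Second component `ξ₂` of the lifted evaluation map `ev_τ`: the class of the loop `τ`
followed by the path `γ(1−t)`, `t ∈ [0,1−v]` (i.e. `γ` traversed backwards from `1`
to `v`). -/
def evSnd (γ : ℝ → M) (hγ : Continuous γ) (p : M) (h1 : γ 1 = p)
    (τ : Path.Homotopic.Quotient p p) (v : ℝ) : Cover M p :=
  ⟨γ v, Path.Homotopic.Quotient.trans τ ⟦(seg γ hγ 1 v).cast h1.symm rfl⟧⟩

/-- The lift `Φ̃_T` of the time-`T` flow map to the universal cover: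
`(x, ξ) ↦ (Φ_T(x), ξ` followed by the flow arc `Φ_t(x)`, `t ∈ [0,T])`. -/
def coverFlow (Φ : ℝ → M → M) (hΦ : Continuous fun q : ℝ × M => Φ q.1 q.2)
    (hΦ0 : ∀ x, Φ 0 x = x) (T : ℝ) (p : M) : Cover M p → Cover M p :=
  fun z => ⟨Φ T z.1, Path.Homotopic.Quotient.trans z.2 ⟦(flowSeg Φ hΦ z.1 0 T).cast (hΦ0 z.1).symm rfl⟧⟩
section Aux

attribute [local instance] Path.Homotopic.setoid

private lemma quot_comp_lift {X : Type*} [TopologicalSpace X] {a b c : X} (P₀ : Path a b)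
    (P₁ : Path b c) : (⟦P₀.trans P₁⟧ : Path.Homotopic.Quotient a c) =
      Path.Homotopic.Quotient.trans ⟦P₀⟧ ⟦P₁⟧ := rfl

private lemma quot_comp_assoc {X : Type*} [TopologicalSpace X] {a b c d : X}
    (f : Path.Homotopic.Quotient a b) (g : Path.Homotopic.Quotient b c)
    (h : Path.Homotopic.Quotient c d) :
    (f.trans g).trans h = f.trans (g.trans h) := by
  induction f using Quotient.inductionOn
  induction g using Quotient.inductionOn
  induction h using Quotient.inductionOn
  rw [← quot_comp_lift, ← quot_comp_lift, ← quot_comp_lift,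
    ← quot_comp_lift]
  exact Quotient.sound ⟨Path.Homotopy.transAssoc _ _ _⟩

private lemma quot_comp_symm {X : Type*} [TopologicalSpace X] {a b : X} (c : Path a b) :
    Path.Homotopic.Quotient.trans (⟦c⟧ : Path.Homotopic.Quotient a b) ⟦c.symm⟧ = ⟦Path.refl a⟧ := by
  rw [← quot_comp_lift]
  exact Quotient.sound ⟨(Path.Homotopy.reflTransSymm c).symm⟩

private lemma quot_symm_comp {X : Type*} [TopologicalSpace X] {a b : X} (c : Path a b) :
    Path.Homotopic.Quotient.trans (⟦c.symm⟧ : Path.Homotopic.Quotient b a) ⟦c⟧ = ⟦Path.refl b⟧ := by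
  rw [← quot_comp_lift]
  exact Quotient.sound ⟨(Path.Homotopy.reflSymmTrans c).symm⟩

private lemma quot_comp_refl {X : Type*} [TopologicalSpace X] {a b : X}
    (f : Path.Homotopic.Quotient a b) : f.trans ⟦Path.refl b⟧ = f := by
  induction f using Quotient.inductionOn
  rw [← quot_comp_lift]
  exact Quotient.sound ⟨Path.Homotopy.transRefl _⟩

private lemma quot_cancel_iff {X : Type*} [TopologicalSpace X] {x y : X}
    (a : Path.Homotopic.Quotient x y) (c : Path y x) (t : Path.Homotopic.Quotient x x) :
    a = t.trans ⟦c.symm⟧ ↔ a.trans ⟦c⟧ = t := by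
  constructor
  · rintro rfl
    erw [quot_comp_assoc, quot_symm_comp, quot_comp_refl]
  · rintro rfl
    erw [quot_comp_assoc, quot_comp_symm, quot_comp_refl]

private lemma cover_mk_cast {X : Type*} [TopologicalSpace X] {p x y : X} (h : y = x)
    (P : Path p x) :
    (⟨x, ⟦P⟧⟩ : Σ z : X, Path.Homotopic.Quotient p z) = ⟨y, ⟦P.cast rfl h⟧⟩ := by
  subst h
  have hP : P.cast rfl rfl = P := by ext s; rfl
  rw [hP]

private lemma cover_mk_inj {X : Type*} [TopologicalSpace X] {p x : X}
    (a b : Path.Homotopic.Quotient p x) :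
    (⟨x, a⟩ : Σ z : X, Path.Homotopic.Quotient p z) = ⟨x, b⟩ ↔ a = b := by
  simp

private lemma ev_eq_iff {M : Type*} [TopologicalSpace M] (γ : ℝ → M) (hγ : Continuous γ)
    (p : M) (h0 : γ 0 = p) (h1 : γ 1 = p) (t : Path p p) {u v : ℝ} (h : γ u = γ v) :
    evFst γ hγ p h0 u = evSnd γ hγ p h1 ⟦t⟧ v ↔ dblClass γ hγ p h0 h1 u v h = ⟦t⟧ := by
  set C2 : Path (γ u) p := (seg γ hγ v 1).cast h h1.symm with hC2def
  have hcast : ((seg γ hγ 1 v).cast h1.symm rfl).cast rfl h = C2.symm := by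
    ext s
    show γ (1 + (v - 1) * (s : ℝ)) = γ (v + (1 - v) * ((σ s : ℝ)))
    rw [unitInterval.coe_symm_eq]
    congr 1
    ring
  have htrans : (t.trans ((seg γ hγ 1 v).cast h1.symm rfl)).cast rfl h
      = t.trans (((seg γ hγ 1 v).cast h1.symm rfl).cast rfl h) := by
    ext s; rfl
  have hsnd : evSnd γ hγ p h1 ⟦t⟧ v = ⟨γ u, ⟦t.trans C2.symm⟧⟩ := by
    show (⟨γ v, Path.Homotopic.Quotient.trans ⟦t⟧ ⟦(seg γ hγ 1 v).cast h1.symm rfl⟧⟩ :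
        Σ z : M, Path.Homotopic.Quotient p z) = _
    rw [← quot_comp_lift, cover_mk_cast h, htrans, hcast]
  have hA : ((seg γ hγ 0 u).trans ((seg γ hγ v 1).cast h rfl)).cast h0.symm h1.symm
      = ((seg γ hγ 0 u).cast h0.symm rfl).trans C2 := by
    ext s; rfl
  have hdbl : dblClass γ hγ p h0 h1 u v h
      = Path.Homotopic.Quotient.trans ⟦(seg γ hγ 0 u).cast h0.symm rfl⟧ ⟦C2⟧ := by
    rw [← quot_comp_lift]
    exact congrArg (Quotient.mk _) hA
  rw [hsnd, hdbl]
  constructor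
  · intro hEq
    have h2 : (⟦(seg γ hγ 0 u).cast h0.symm rfl⟧ : Path.Homotopic.Quotient p (γ u)) =
        ⟦t.trans C2.symm⟧ := (cover_mk_inj _ _).mp hEq
    rw [quot_comp_lift] at h2
    exact (quot_cancel_iff _ C2 ⟦t⟧).mp h2
  · intro hEq
    refine (cover_mk_inj _ _).mpr ?_
    rw [quot_comp_lift]
    exact (quot_cancel_iff _ C2 ⟦t⟧).mpr hEq

end Aux

/-- **Lemma `Lem:Intersec`**: for all sufficiently small `ε > 0`, the intersection number
`I(ev_τ(C^ε), Δ)` of the image of the `2`-simplex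
`C^ε = {(u,v) : ε ≤ u, u+ε ≤ v, v ≤ 1−ε}` under the lifted evaluation map `ev_τ` with the
diagonal `Δ ⊂ Σ̃ × Σ̃` equals the coefficient `⟨γ⟩^τ` of `τ` in `⟨γ⟩`.  Since all
intersections are transversal, the intersection number is the signed (by the orientation
sign of `(γ'(u), γ'(v))`) count of the parameters `(u,v) ∈ C^ε` with
`ev_τ(u,v) ∈ Δ`, i.e. with `ξ₁(u) = ξ₂(v)` in the universal cover. -/
theorem intersection_number_with_diagonal
    {M : Type*} [TopologicalSpace M] [ChartedSpace E2 M] [IsManifold (𝓡 2) (⊤ : ℕ∞) M]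
    -- an orientation of the surface, given by a continuous nonvanishing area form
    (ω : M → E2 →L[ℝ] E2 →L[ℝ] ℝ)
    (hω_cont : Continuous ω)
    (hω_alt : ∀ x v, ω x v v = 0)
    (hω_nondeg : ∀ (x : M) (v : E2), v ≠ 0 → ∃ w : E2, ω x v w ≠ 0)
    -- the curve: a generic immersion `γ : [0,1] → M` with base point `p = γ(0) = γ(1)`
    (γ : ℝ → M) (p : M)
    (hγ_smooth : ContMDiff 𝓘(ℝ, ℝ) (𝓡 2) (⊤ : ℕ∞) γ)
    (hγ_cont : Continuous γ)
    (h0 : γ 0 = p) (h1 : γ 1 = p)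
    (hclosed : tvec γ 0 = tvec γ 1)
    (himm : ∀ t, t ∈ Set.Icc (0:ℝ) 1 → tvec γ t ≠ 0)
    -- the double points of `γ`
    (k : ℕ) (u v : Fin k → ℝ)
    (huv : ∀ i, γ (u i) = γ (v i))
    (huv_range : ∀ i, 0 < u i ∧ u i < v i ∧ v i < 1)
    (huv_p : ∀ i, γ (u i) ≠ p)
    (huv_trans : ∀ i, ω (γ (u i)) (tvec γ (u i)) (tvec γ (v i)) ≠ 0)
    (huv_inj : Function.Injective fun i => (u i, v i))
    (huv_all : ∀ s t : ℝ, 0 ≤ s → s < t → t < 1 → γ s = γ t → ∃ i, u i = s ∧ v i = t)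
    (hno_triple : ∀ i j, i ≠ j → γ (u i) ≠ γ (u j))
    -- a homotopy class `τ ∈ π₁(Σ,p)`
    (τ : Path.Homotopic.Quotient p p) :
    ∃ ε₀ : ℝ, 0 < ε₀ ∧ ∀ ε : ℝ, 0 < ε → ε < ε₀ →
      -- the (finite) set of intersections of `ev_τ(C^ε)` with the diagonal `Δ`
      ∀ hfin : {q : ℝ × ℝ | ε ≤ q.1 ∧ q.1 + ε ≤ q.2 ∧ q.2 ≤ 1 - ε ∧
          evFst γ hγ_cont p h0 q.1 = evSnd γ hγ_cont p h1 τ q.2}.Finite,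
      -- I(ev_τ(C^ε), Δ) = ⟨γ⟩^τ
      (∑ q ∈ hfin.toFinset, osgn (ω (γ q.1) (tvec γ q.1) (tvec γ q.2)))
        =
      (∑ i : Fin k, osgn (ω (γ (u i)) (tvec γ (u i)) (tvec γ (v i))) •
          Finsupp.single (dblClass γ hγ_cont p h0 h1 (u i) (v i) (huv i)) (1 : ℤ)) τ := by
  classical
  obtain ⟨t, rfl⟩ := Quotient.exists_rep τ
  obtain ⟨ε₀, hε₀, hb⟩ : ∃ ε₀ : ℝ, 0 < ε₀ ∧ ∀ i, ε₀ ≤ u i ∧ ε₀ ≤ v i - u i ∧ ε₀ ≤ 1 - v i := by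
    rcases isEmpty_or_nonempty (Fin k) with he | hne
    · exact ⟨1, one_pos, fun i => isEmptyElim i⟩
    · refine ⟨Finset.univ.inf' Finset.univ_nonempty
        (fun i => min (u i) (min (v i - u i) (1 - v i))), ?_, ?_⟩
      · rw [Finset.lt_inf'_iff]
        intro i _
        have hr := huv_range i
        refine lt_min (hr.1) (lt_min (by linarith [hr.2.1]) (by linarith [hr.2.2]))
      · intro i
        have hle := Finset.inf'_le (fun i => min (u i) (min (v i - u i) (1 - v i)))
          (Finset.mem_univ i)
        exact ⟨le_trans hle (min_le_left _ _),
          le_trans hle (le_trans (min_le_right _ _) (min_le_left _ _)),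
          le_trans hle (le_trans (min_le_right _ _) (min_le_right _ _))⟩
  refine ⟨ε₀, hε₀, fun ε hε hεε₀ hfin => ?_⟩
  have hset : hfin.toFinset = (Finset.univ.filter
      (fun i => dblClass γ hγ_cont p h0 h1 (u i) (v i) (huv i) = ⟦t⟧)).image
      (fun i => (u i, v i)) := by
    ext ⟨q1, q2⟩
    constructor
    · intro hq
      rw [Set.Finite.mem_toFinset] at hq
      obtain ⟨hq1, hq2, hq3, heq⟩ := hq
      have hγq : γ q1 = γ q2 :=
        congrArg (fun z : (Σ x : M, Path.Homotopic.Quotient p x) => z.1) heq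
      obtain ⟨i, hi1, hi2⟩ := huv_all q1 q2 (by dsimp at hq1 ⊢; linarith)
        (by dsimp at hq1 hq2 ⊢; linarith) (by dsimp at hq3 ⊢; linarith) hγq
      subst hi1
      subst hi2
      refine Finset.mem_image.mpr ⟨i, Finset.mem_filter.mpr ⟨Finset.mem_univ i, ?_⟩, rfl⟩
      exact (ev_eq_iff γ hγ_cont p h0 h1 t (huv i)).mp heq
    · intro hq
      rw [Set.Finite.mem_toFinset]
      obtain ⟨i, hi, hqe⟩ := Finset.mem_image.mp hq
      have hdi := (Finset.mem_filter.mp hi).2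
      rw [Prod.mk.injEq] at hqe
      obtain ⟨h1', h2'⟩ := hqe
      subst h1'
      subst h2'
      have hbi := hb i
      refine ⟨by dsimp; linarith [hbi.1], by dsimp; linarith [hbi.2.1],
        by dsimp; linarith [hbi.2.2], ?_⟩
      exact (ev_eq_iff γ hγ_cont p h0 h1 t (huv i)).mpr hdi
  rw [hset, Finset.sum_image (fun a _ b _ hab => huv_inj hab), Finset.sum_filter]
  erw [Finsupp.finset_sum_apply]
  apply Finset.sum_congr rfl
  intro i _
  erw [Finsupp.smul_apply, Finsupp.single_apply]
  by_cases hdi : dblClass γ hγ_cont p h0 h1 (u i) (v i) (huv i) = ⟦t⟧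
  · simp [hdi]
  · rw [if_neg hdi, if_neg hdi]
    simp
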